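/- arXiv:1909.11518 — 2 statements merged into one kernel-verified Lean document; each statement's English description precedes it below -/
import Mathlib

section
/- Let X be standard Gaussian and let g be the bounded solution of the Stein equation g'(x) − x g(x) = h(x) − E[h(X)], i.e. g(x) = e^{x²/2} ∫_{-∞}^x (h(u) − E[h(X)]) e^{-u²/2} du. If h is bounded with κ₁ = sup h − inf h, then |g(x)| ≤ κ₁ · Φ(x)(1−Φ(x))/φ(x) ≤ κ₁ (1/2)√(π/2) for all x. -/
open Real MeasureTheory Set

/-- Standard Gaussian pdf. -/
noncomputable def gaussPdf (x : ℝ) : ℝ := (Real.sqrt (2 * π))⁻¹ * Real.exp (-x ^ 2 / 2)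

/-- Standard Gaussian cdf. -/
noncomputable def gaussCdf (x : ℝ) : ℝ := ∫ u in Set.Iic x, gaussPdf u

open Filter Topology

lemma sqrt2pi_pos : (0:ℝ) < Real.sqrt (2 * π) := Real.sqrt_pos.2 (by positivity)

lemma gaussPdf_pos (x : ℝ) : 0 < gaussPdf x := by
  unfold gaussPdf; positivity

lemma integrable_gaussPdf : Integrable gaussPdf := by
  have h : Integrable (fun x : ℝ => Real.exp (-(2⁻¹) * x ^ 2)) :=
    integrable_exp_neg_mul_sq (by norm_num)
  have : Integrable (fun x : ℝ => Real.exp (-x ^ 2 / 2)) := by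
    convert h using 2 with x; ring_nf
  exact (this.const_mul ((Real.sqrt (2 * π))⁻¹) : _)

lemma integral_gaussPdf : ∫ x, gaussPdf x = 1 := by
  have h : ∫ x : ℝ, Real.exp (-(2⁻¹) * x ^ 2) = Real.sqrt (π / 2⁻¹) :=
    integral_gaussian 2⁻¹
  have h2 : ∫ x : ℝ, Real.exp (-x ^ 2 / 2) = Real.sqrt (2 * π) := by
    rw [show (2:ℝ) * π = π / 2⁻¹ by ring, ← h]
    congr 1 with x; ring_nf
  unfold gaussPdf
  rw [MeasureTheory.integral_const_mul, h2]
  field_simp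

lemma gaussCdf_nonneg (x : ℝ) : 0 ≤ gaussCdf x :=
  setIntegral_nonneg measurableSet_Iic fun u _ => (gaussPdf_pos u).le

lemma gaussCdf_add_Ioi (x : ℝ) : gaussCdf x + ∫ u in Set.Ioi x, gaussPdf u = 1 := by
  have := MeasureTheory.integral_add_compl (measurableSet_Iic (a := x)) integrable_gaussPdf
  rw [compl_Iic] at this
  rw [gaussCdf, this, integral_gaussPdf]

lemma integral_Ioi_gaussPdf (x : ℝ) : ∫ u in Set.Ioi x, gaussPdf u = 1 - gaussCdf x := by
  have := gaussCdf_add_Ioi x; linarith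

lemma gaussCdf_le_one (x : ℝ) : gaussCdf x ≤ 1 := by
  have h1 : 0 ≤ ∫ u in Set.Ioi x, gaussPdf u :=
    setIntegral_nonneg measurableSet_Ioi fun u _ => (gaussPdf_pos u).le
  have := gaussCdf_add_Ioi x; linarith

lemma gaussCdf_neg (x : ℝ) : gaussCdf (-x) = 1 - gaussCdf x := by
  have heven : ∀ u : ℝ, gaussPdf (-u) = gaussPdf u := by
    intro u; simp [gaussPdf]
  have h := integral_comp_neg_Iic (-x) gaussPdf
  rw [neg_neg] at h
  calc gaussCdf (-x) = ∫ u in Set.Iic (-x), gaussPdf (-u) := by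
        unfold gaussCdf; congr 1; ext u; rw [heven]
    _ = ∫ u in Set.Ioi x, gaussPdf u := h
    _ = 1 - gaussCdf x := integral_Ioi_gaussPdf x

lemma gaussCdf_zero : gaussCdf 0 = 1 / 2 := by
  have := gaussCdf_neg 0; rw [neg_zero] at this; linarith

lemma continuous_gaussPdf : Continuous gaussPdf := by
  unfold gaussPdf; fun_prop

lemma hasDerivAt_gaussCdf (x : ℝ) : HasDerivAt gaussCdf (gaussPdf x) x := by
  have key : ∀ y : ℝ, gaussCdf y = gaussCdf 0 + ∫ u in (0:ℝ)..y, gaussPdf u := by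
    intro y
    have := intervalIntegral.integral_Iic_sub_Iic (μ := volume) (f := gaussPdf) (a := 0) (b := y)
      integrable_gaussPdf.integrableOn integrable_gaussPdf.integrableOn
    unfold gaussCdf; linarith
  have hd : HasDerivAt (fun y => gaussCdf 0 + ∫ u in (0:ℝ)..y, gaussPdf u) (gaussPdf x) x := by
    have := (intervalIntegral.integral_hasStrictDerivAt_right (a := (0:ℝ)) (b := x)
      (integrable_gaussPdf.intervalIntegrable)
      (continuous_gaussPdf.stronglyMeasurableAtFilter _ _)
      continuous_gaussPdf.continuousAt).hasDerivAt
    exact (this.const_add (gaussCdf 0))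
  exact hd.congr_of_eventuallyEq (Filter.Eventually.of_forall key)

lemma tendsto_gaussCdf_atTop : Tendsto gaussCdf atTop (𝓝 1) := by
  have h := MeasureTheory.tendsto_setIntegral_of_monotone (μ := volume)
    (s := fun x : ℝ => Set.Iic x) (f := gaussPdf)
    (fun i => measurableSet_Iic) (fun a b hab => Iic_subset_Iic.2 hab)
    (by rw [iUnion_Iic]; exact integrable_gaussPdf.integrableOn)
  rw [iUnion_Iic] at h
  change Tendsto (fun x => ∫ u in Set.Iic x, gaussPdf u) atTop (𝓝 1)
  simpa [gaussCdf, integral_gaussPdf, Measure.restrict_univ] using h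

lemma hasDerivAt_gaussPdf (t : ℝ) : HasDerivAt gaussPdf (-t * gaussPdf t) t := by
  have h1 : HasDerivAt (fun t : ℝ => -t ^ 2 / 2) (-t) t := by
    have := (hasDerivAt_pow 2 t).neg.div_const 2
    exact this.congr_deriv (by norm_num; ring)
  have h2 := h1.exp
  have h3 := h2.const_mul ((Real.sqrt (2 * π))⁻¹)
  exact h3.congr_deriv (by unfold gaussPdf; ring)

noncomputable def steinPsi (t : ℝ) : ℝ := (2 * gaussCdf t - 1) / Real.sqrt (2 * π) - t / 4

noncomputable def steinF (t : ℝ) : ℝ := Real.exp (-t ^ 2 / 2) / 4 - gaussCdf t * (1 - gaussCdf t)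

lemma hasDerivAt_steinPsi (t : ℝ) :
    HasDerivAt steinPsi (2 * gaussPdf t / Real.sqrt (2 * π) - 1 / 4) t := by
  have h1 := ((hasDerivAt_gaussCdf t).const_mul 2).sub_const 1
  have h2 := h1.div_const (Real.sqrt (2 * π))
  have h3 : HasDerivAt (fun t : ℝ => t / 4) (1 / 4) t := by
    simpa using (hasDerivAt_id t).div_const 4
  exact h2.sub h3

lemma continuous_gaussCdf : Continuous gaussCdf :=
  continuous_iff_continuousAt.2 fun t => (hasDerivAt_gaussCdf t).continuousAt

lemma steinPsi_zero : steinPsi 0 = 0 := by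
  unfold steinPsi; rw [gaussCdf_zero]; norm_num

lemma steinF_zero : steinF 0 = 0 := by
  unfold steinF; rw [gaussCdf_zero]; norm_num

lemma hasDerivAt_steinF (t : ℝ) :
    HasDerivAt steinF (Real.exp (-t ^ 2 / 2) * steinPsi t) t := by
  have hexp : HasDerivAt (fun t : ℝ => Real.exp (-t ^ 2 / 2)) (-t * Real.exp (-t ^ 2 / 2)) t := by
    have h1 : HasDerivAt (fun t : ℝ => -t ^ 2 / 2) (-t) t := by
      have := (hasDerivAt_pow 2 t).neg.div_const 2
      exact this.congr_deriv (by norm_num; ring)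
    have := h1.exp
    exact this.congr_deriv (by ring)
  have hΦ := hasDerivAt_gaussCdf t
  have hprod : HasDerivAt (fun t => gaussCdf t * (1 - gaussCdf t))
      (gaussPdf t * (1 - gaussCdf t) + gaussCdf t * (0 - gaussPdf t)) t :=
    hΦ.mul ((hasDerivAt_const t (1 : ℝ)).sub hΦ)
  have := (hexp.div_const 4).sub hprod
  refine this.congr_deriv ?_
  unfold steinPsi gaussPdf
  have h2π := sqrt2pi_pos
  field_simp
  ring

lemma concave_steinPsi : ConcaveOn ℝ (Set.Ici 0) steinPsi := by
  have hc : Continuous steinPsi := by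
    exact (((continuous_const.mul continuous_gaussCdf).sub continuous_const).div_const _).sub
      (continuous_id.div_const 4)
  refine concaveOn_of_hasDerivWithinAt2_nonpos (convex_Ici 0) hc.continuousOn
    (f' := fun t => 2 * gaussPdf t / Real.sqrt (2 * π) - 1 / 4)
    (f'' := fun t => 2 * (-t * gaussPdf t) / Real.sqrt (2 * π))
    (fun t _ => (hasDerivAt_steinPsi t).hasDerivWithinAt) (fun t _ => ?_) (fun t ht => ?_)
  · exact ((((hasDerivAt_gaussPdf t).const_mul 2).div_const _).sub_const _).hasDerivWithinAt
  · rw [interior_Ici] at ht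
    have h1 : 0 < t := ht
    have h2 := gaussPdf_pos t
    have h3 := sqrt2pi_pos
    have : 2 * (-t * gaussPdf t) ≤ 0 := by nlinarith
    exact div_nonpos_of_nonpos_of_nonneg this h3.le

lemma continuous_steinF : Continuous steinF :=
  continuous_iff_continuousAt.2 fun t => (hasDerivAt_steinF t).continuousAt

lemma tendsto_steinF : Tendsto steinF atTop (𝓝 0) := by
  have harg : Tendsto (fun t : ℝ => t ^ 2 / 2) atTop atTop :=
    (tendsto_pow_atTop (by norm_num)).atTop_div_const (by norm_num)
  have h1 : Tendsto (fun t : ℝ => Real.exp (-t ^ 2 / 2) / 4) atTop (𝓝 0) := by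
    have := (Real.tendsto_exp_neg_atTop_nhds_zero.comp harg).div_const 4
    simpa [Function.comp, neg_div] using this
  have h2 : Tendsto (fun t => gaussCdf t * (1 - gaussCdf t)) atTop (𝓝 (1 * (1 - 1))) :=
    tendsto_gaussCdf_atTop.mul (tendsto_const_nhds.sub tendsto_gaussCdf_atTop)
  have := h1.sub h2
  norm_num at this
  exact this

lemma steinF_nonneg_of_nonneg (x : ℝ) (hx : 0 ≤ x) : 0 ≤ steinF x := by
  rcases eq_or_lt_of_le hx with heq | hxpos
  · rw [← heq, steinF_zero]
  rcases le_or_gt 0 (steinPsi x) with hpsi | hpsi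
  · have hmono : MonotoneOn steinF (Set.Icc 0 x) := by
      apply monotoneOn_of_deriv_nonneg (convex_Icc 0 x) continuous_steinF.continuousOn
        (fun t _ => (hasDerivAt_steinF t).differentiableAt.differentiableWithinAt)
      intro t ht
      rw [interior_Icc] at ht
      rw [(hasDerivAt_steinF t).deriv]
      apply mul_nonneg (Real.exp_nonneg _)
      have ht1 : 0 < t := ht.1
      have ht2 : t < x := ht.2
      have ha : (0:ℝ) ≤ (x - t) / x := div_nonneg (by linarith) hxpos.le
      have hb' : (0:ℝ) ≤ t / x := by positivity
      have hab : (x - t) / x + t / x = 1 := by field_simp; ring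
      have hcomb := concave_steinPsi.2 (self_mem_Ici) (mem_Ici.2 hx) ha hb' hab
      simp only [smul_eq_mul, steinPsi_zero, mul_zero, zero_add, add_zero, smul_zero] at hcomb
      rw [div_mul_cancel₀ _ hxpos.ne'] at hcomb
      nlinarith
    calc (0:ℝ) = steinF 0 := steinF_zero.symm
      _ ≤ steinF x := hmono (left_mem_Icc.2 hx) (right_mem_Icc.2 hx) hx
  · have hanti : AntitoneOn steinF (Set.Ici x) := by
      apply antitoneOn_of_deriv_nonpos (convex_Ici x) continuous_steinF.continuousOn
        (fun t _ => (hasDerivAt_steinF t).differentiableAt.differentiableWithinAt)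
      intro t ht
      rw [interior_Ici] at ht
      rw [(hasDerivAt_steinF t).deriv]
      apply mul_nonpos_of_nonneg_of_nonpos (Real.exp_nonneg _)
      have htx : x < t := ht
      have htpos : 0 < t := hxpos.trans htx
      have ha : (0:ℝ) ≤ x / t := div_nonneg hxpos.le htpos.le
      have hb' : (0:ℝ) ≤ (t - x) / t := div_nonneg (by linarith) htpos.le
      have hab : x / t + (t - x) / t = 1 := by field_simp; ring
      have hcomb := concave_steinPsi.2 (mem_Ici.2 htpos.le) (self_mem_Ici) ha hb' hab
      simp only [smul_eq_mul, steinPsi_zero, mul_zero, zero_add, add_zero, smul_zero] at hcomb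
      rw [div_mul_cancel₀ _ htpos.ne'] at hcomb
      have hxt : 0 < x / t := by positivity
      nlinarith
    have hev : ∀ᶠ t in atTop, steinF t ≤ steinF x := by
      filter_upwards [eventually_ge_atTop x] with t ht
      exact hanti (mem_Ici.2 le_rfl) (mem_Ici.2 ht) ht
    exact le_of_tendsto tendsto_steinF hev

lemma gauss_key (x : ℝ) : gaussCdf x * (1 - gaussCdf x) ≤ Real.exp (-x ^ 2 / 2) / 4 := by
  rcases le_or_gt 0 x with hx | hx
  · have := steinF_nonneg_of_nonneg x hx
    unfold steinF at this; linarith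
  · have h0 := steinF_nonneg_of_nonneg (-x) (by linarith)
    unfold steinF at h0
    rw [gaussCdf_neg, show ((-x) ^ 2 : ℝ) = x ^ 2 by ring] at h0
    nlinarith

lemma gaussPdf_div (a x : ℝ) : a / gaussPdf x = a * (Real.sqrt (2 * π) * Real.exp (x ^ 2 / 2)) := by
  unfold gaussPdf
  rw [show (-x ^ 2 / 2 : ℝ) = -(x ^ 2 / 2) by ring, Real.exp_neg]
  have h1 := sqrt2pi_pos
  have h2 := Real.exp_pos (x ^ 2 / 2)
  field_simp

lemma exp_mul_exp_neg (x : ℝ) : Real.exp (-x ^ 2 / 2) * Real.exp (x ^ 2 / 2) = 1 := by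
  rw [← Real.exp_add]; ring_nf; exact Real.exp_zero

/-- Bound on the solution of the Gaussian Stein equation for bounded `h`:
`|g(x)| ≤ κ₁ Φ(x)(1-Φ(x))/φ(x) ≤ κ₁ (1/2)√(π/2)`, with `κ₁ = sup h - inf h`. -/
theorem stmt2 (h : ℝ → ℝ) (hmeas : Measurable h)
    (hbdd : BddAbove (Set.range h)) (hbdd' : BddBelow (Set.range h))
    (κ₁ : ℝ) (hκ₁ : κ₁ = (⨆ y, h y) - ⨅ y, h y)
    (g : ℝ → ℝ)
    (hg : ∀ x, g x = Real.exp (x ^ 2 / 2) *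
      ∫ u in Set.Iic x, (h u - ∫ v, h v * gaussPdf v) * Real.exp (-u ^ 2 / 2)) :
    ∀ x : ℝ,
      |g x| ≤ κ₁ * (gaussCdf x * (1 - gaussCdf x) / gaussPdf x) ∧
      κ₁ * (gaussCdf x * (1 - gaussCdf x) / gaussPdf x) ≤ κ₁ * ((1 / 2) * Real.sqrt (π / 2)) := by
  intro x
  have hhS : ∀ u, h u ≤ ⨆ y, h y := fun u => le_ciSup hbdd u
  have hhm : ∀ u, (⨅ y, h y) ≤ h u := fun u => ciInf_le hbdd' u
  set S := ⨆ y, h y with hS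
  set m := ⨅ y, h y with hm
  have hκnn : 0 ≤ κ₁ := by
    rw [hκ₁]
    have := (hhm 0).trans (hhS 0)
    linarith
  have hbound : ∀ u, ‖h u‖ ≤ |S| + |m| := by
    intro u
    rw [Real.norm_eq_abs]
    refine abs_le.2 ⟨?_, ?_⟩
    · have h1 := neg_abs_le m
      have h2 := hhm u
      have h3 := abs_nonneg S
      linarith
    · have h1 := le_abs_self S
      have h2 := hhS u
      have h3 := abs_nonneg m
      linarith
  have hint : Integrable (fun u => h u * gaussPdf u) :=
    integrable_gaussPdf.bdd_mul hmeas.aestronglyMeasurable (Filter.Eventually.of_forall hbound)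
  set μ := ∫ v, h v * gaussPdf v with hμ
  have hμS : μ ≤ S := by
    have hle : μ ≤ ∫ v, S * gaussPdf v :=
      integral_mono hint (integrable_gaussPdf.const_mul S)
        (fun v => mul_le_mul_of_nonneg_right (hhS v) (gaussPdf_pos v).le)
    rwa [MeasureTheory.integral_const_mul, integral_gaussPdf, mul_one] at hle
  have hmμ : m ≤ μ := by
    have hle : (∫ v, m * gaussPdf v) ≤ μ :=
      integral_mono (integrable_gaussPdf.const_mul m) hint
        (fun v => mul_le_mul_of_nonneg_right (hhm v) (gaussPdf_pos v).le)
    rwa [MeasureTheory.integral_const_mul, integral_gaussPdf, mul_one] at hle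
  have hint2 : Integrable (fun u => (h u - μ) * gaussPdf u) := by
    have heq : (fun u => (h u - μ) * gaussPdf u)
        = fun u => h u * gaussPdf u - μ * gaussPdf u := by
      funext u; ring
    rw [heq]
    exact hint.sub (integrable_gaussPdf.const_mul μ)
  set Φx := gaussCdf x with hΦx
  have hΦ0 := gaussCdf_nonneg x
  have hΦ1 := gaussCdf_le_one x
  set I := ∫ u in Set.Iic x, (h u - μ) * gaussPdf u with hI
  have htotal : ∫ u, (h u - μ) * gaussPdf u = 0 := by
    have heq : (fun u => (h u - μ) * gaussPdf u)
        = fun u => h u * gaussPdf u - μ * gaussPdf u := by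
      funext u; ring
    rw [heq, integral_sub hint (integrable_gaussPdf.const_mul μ),
      MeasureTheory.integral_const_mul, integral_gaussPdf]
    simp [hμ]
  have hIT : I + ∫ u in Set.Ioi x, (h u - μ) * gaussPdf u = 0 := by
    have hsplit := MeasureTheory.integral_add_compl (measurableSet_Iic (a := x)) hint2
    rw [compl_Iic] at hsplit
    rw [hI, hsplit, htotal]
  have hIic : ∫ u in Set.Iic x, gaussPdf u = Φx := rfl
  have hIoi : ∫ u in Set.Ioi x, gaussPdf u = 1 - Φx := integral_Ioi_gaussPdf x
  -- upper bounds on I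
  have hIub1 : I ≤ (S - μ) * Φx := by
    have hle : I ≤ ∫ u in Set.Iic x, (S - μ) * gaussPdf u :=
      setIntegral_mono_on hint2.integrableOn
        ((integrable_gaussPdf.const_mul (S - μ)).integrableOn) measurableSet_Iic
        (fun u _ => mul_le_mul_of_nonneg_right (by linarith [hhS u]) (gaussPdf_pos u).le)
    rwa [MeasureTheory.integral_const_mul, hIic] at hle
  have hIlb1 : (m - μ) * Φx ≤ I := by
    have hle : (∫ u in Set.Iic x, (m - μ) * gaussPdf u) ≤ I :=
      setIntegral_mono_on ((integrable_gaussPdf.const_mul (m - μ)).integrableOn)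
        hint2.integrableOn measurableSet_Iic
        (fun u _ => mul_le_mul_of_nonneg_right (by linarith [hhm u]) (gaussPdf_pos u).le)
    rwa [MeasureTheory.integral_const_mul, hIic] at hle
  have hTub : -I ≤ (S - μ) * (1 - Φx) := by
    have hle : (∫ u in Set.Ioi x, (h u - μ) * gaussPdf u)
        ≤ ∫ u in Set.Ioi x, (S - μ) * gaussPdf u :=
      setIntegral_mono_on hint2.integrableOn
        ((integrable_gaussPdf.const_mul (S - μ)).integrableOn) measurableSet_Ioi
        (fun u _ => mul_le_mul_of_nonneg_right (by linarith [hhS u]) (gaussPdf_pos u).le)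
    rw [MeasureTheory.integral_const_mul, hIoi] at hle
    linarith
  have hTlb : (m - μ) * (1 - Φx) ≤ -I := by
    have hle : (∫ u in Set.Ioi x, (m - μ) * gaussPdf u)
        ≤ ∫ u in Set.Ioi x, (h u - μ) * gaussPdf u :=
      setIntegral_mono_on ((integrable_gaussPdf.const_mul (m - μ)).integrableOn)
        hint2.integrableOn measurableSet_Ioi
        (fun u _ => mul_le_mul_of_nonneg_right (by linarith [hhm u]) (gaussPdf_pos u).le)
    rw [MeasureTheory.integral_const_mul, hIoi] at hle
    linarith
  -- combine: |I| ≤ κ₁ Φ(1-Φ)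
  have habsI : |I| ≤ κ₁ * (Φx * (1 - Φx)) := by
    rw [hκ₁]
    refine abs_le.2 ⟨?_, ?_⟩
    · have e1 : (1 - Φx) * ((m - μ) * Φx) ≤ (1 - Φx) * I :=
        mul_le_mul_of_nonneg_left hIlb1 (by linarith)
      have e2 : Φx * ((m - μ) * (1 - Φx)) ≤ Φx * (-I) :=
        mul_le_mul_of_nonneg_left hTlb hΦ0
      nlinarith
    · have e1 : (1 - Φx) * I ≤ (1 - Φx) * ((S - μ) * Φx) :=
        mul_le_mul_of_nonneg_left hIub1 (by linarith)
      have e2 : Φx * (-I) ≤ Φx * ((S - μ) * (1 - Φx)) :=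
        mul_le_mul_of_nonneg_left hTub hΦ0
      nlinarith
  -- rewrite g x
  have hgx : g x = Real.exp (x ^ 2 / 2) * (Real.sqrt (2 * π) * I) := by
    rw [hg x]
    congr 1
    have heq : (fun u => (h u - μ) * Real.exp (-u ^ 2 / 2))
        = fun u => Real.sqrt (2 * π) * ((h u - μ) * gaussPdf u) := by
      funext u
      unfold gaussPdf
      have h0 : Real.sqrt (2 * π) ≠ 0 := sqrt2pi_pos.ne'
      field_simp
    rw [heq, MeasureTheory.integral_const_mul, hI]
  have hdiv : Φx * (1 - Φx) / gaussPdf x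
      = Φx * (1 - Φx) * (Real.sqrt (2 * π) * Real.exp (x ^ 2 / 2)) := gaussPdf_div _ x
  constructor
  · rw [hgx, abs_mul, abs_mul, abs_of_pos (Real.exp_pos _), abs_of_pos sqrt2pi_pos, hdiv]
    have hpos : (0:ℝ) < Real.exp (x ^ 2 / 2) * Real.sqrt (2 * π) := by positivity
    have := mul_le_mul_of_nonneg_left habsI hpos.le
    nlinarith
  · rw [hdiv]
    have hkey := gauss_key x
    have hEpos : (0:ℝ) < Real.sqrt (2 * π) * Real.exp (x ^ 2 / 2) := by positivity
    have h1 : Φx * (1 - Φx) * (Real.sqrt (2 * π) * Real.exp (x ^ 2 / 2))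
        ≤ Real.exp (-x ^ 2 / 2) / 4 * (Real.sqrt (2 * π) * Real.exp (x ^ 2 / 2)) :=
      mul_le_mul_of_nonneg_right hkey hEpos.le
    have h2 : Real.exp (-x ^ 2 / 2) / 4 * (Real.sqrt (2 * π) * Real.exp (x ^ 2 / 2))
        = Real.sqrt (2 * π) / 4 := by
      linear_combination (Real.sqrt (2 * π) / 4) * exp_mul_exp_neg x
    have h3 : (1 / 2 : ℝ) * Real.sqrt (π / 2) = Real.sqrt (2 * π) / 4 := by
      have h4 : Real.sqrt (2 * π) = 2 * Real.sqrt (π / 2) := by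
        rw [show (2 * π : ℝ) = 2 ^ 2 * (π / 2) by ring, Real.sqrt_mul (by positivity),
          Real.sqrt_sq (by norm_num)]
      linarith
    rw [h3]
    have : Φx * (1 - Φx) * (Real.sqrt (2 * π) * Real.exp (x ^ 2 / 2))
        ≤ Real.sqrt (2 * π) / 4 := by rw [← h2]; exact h1
    exact mul_le_mul_of_nonneg_left this hκnn
end

section
/- Let X be standard Gaussian and g the bounded solution of g'(x) − x g(x) = h(x) − E[h(X)]. If h is bounded with κ₁ = sup h − inf h then |g'(x)| ≤ κ₁ (1 + |x| Φ(x)(1−Φ(x))/φ(x)) ≤ 2κ₁ for all x. -/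
open Real MeasureTheory Set

lemma integrable_E : Integrable (fun u : ℝ => Real.exp (-u ^ 2 / 2)) := by
  have := integrable_exp_neg_mul_sq (b := (1:ℝ)/2) (by norm_num)
  convert this using 2 with u
  ring

lemma integrable_mulE : Integrable (fun u : ℝ => u * Real.exp (-u ^ 2 / 2)) := by
  have := integrable_mul_exp_neg_mul_sq (b := (1:ℝ)/2) (by norm_num)
  convert this using 3 with u
  ring_nf

lemma min_trick {a b p q S I : ℝ} (ha : 0 ≤ a) (hb : 0 ≤ b) (hp : 0 ≤ p) (hq : 0 ≤ q)
    (hpq : p + q = S) (h1 : I ≤ a * p) (h2 : I ≤ b * q) : S * I ≤ (a + b) * (p * q) := by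
  subst hpq
  rcases le_total (a * p) (b * q) with hle | hle
  · nlinarith [mul_le_mul_of_nonneg_left h1 hq, mul_le_mul_of_nonneg_left h1 hp,
      mul_le_mul_of_nonneg_left hle hp]
  · nlinarith [mul_le_mul_of_nonneg_left h2 hp, mul_le_mul_of_nonneg_left h2 hq,
      mul_le_mul_of_nonneg_left hle hq]

lemma hasDerivAt_negexp (u : ℝ) :
    HasDerivAt (fun t : ℝ => -Real.exp (-t ^ 2 / 2)) (u * Real.exp (-u ^ 2 / 2)) u := by
  have h1 : HasDerivAt (fun t : ℝ => -t ^ 2 / 2) (-u) u := by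
    have := ((hasDerivAt_pow 2 u).neg).div_const 2
    refine this.congr_deriv ?_
    push_cast; ring
  have := (h1.exp).neg
  refine this.congr_deriv ?_
  ring

lemma tendsto_negexp : Filter.Tendsto (fun t : ℝ => -Real.exp (-t ^ 2 / 2)) Filter.atTop (nhds 0) := by
  have h1 : Filter.Tendsto (fun t : ℝ => t ^ 2 / 2) Filter.atTop Filter.atTop :=
    (Filter.tendsto_pow_atTop two_ne_zero).atTop_div_const (by norm_num)
  have h2 := Real.tendsto_exp_neg_atTop_nhds_zero.comp h1
  have h4 : Filter.Tendsto (fun t : ℝ => -Real.exp (-(t ^ 2 / 2))) Filter.atTop (nhds 0) := by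
    simpa [Function.comp] using h2.neg
  convert h4 using 3 with t
  ring

lemma tail_integral {a : ℝ} (ha : 0 < a) :
    ∫ u in Ioi a, u * Real.exp (-u ^ 2 / 2) = Real.exp (-a ^ 2 / 2) := by
  have := integral_Ioi_of_hasDerivAt_of_nonneg (g := fun t : ℝ => -Real.exp (-t ^ 2 / 2))
    (g' := fun u : ℝ => u * Real.exp (-u ^ 2 / 2)) (a := a) (l := 0)
    (Continuous.continuousWithinAt (by continuity))
    (fun u _ => hasDerivAt_negexp u)
    (fun u hu => mul_nonneg (le_trans ha.le (le_of_lt hu)) (Real.exp_nonneg _))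
    tendsto_negexp
  simpa using this

set_option maxHeartbeats 1000000

/-- Bound on the derivative of the solution of the Gaussian Stein equation for bounded `h`:
`|g'(x)| ≤ κ₁ (1 + |x| Φ(x)(1-Φ(x))/φ(x)) ≤ 2κ₁`, with `κ₁ = sup h - inf h`. -/
theorem stmt4 (h : ℝ → ℝ) (hmeas : Measurable h)
    (hbdd : BddAbove (Set.range h)) (hbdd' : BddBelow (Set.range h))
    (κ₁ : ℝ) (hκ₁ : κ₁ = (⨆ y, h y) - ⨅ y, h y)
    (g : ℝ → ℝ)
    (hg : ∀ x, g x = Real.exp (x ^ 2 / 2) *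
      ∫ u in Set.Iic x, (h u - ∫ v, h v * gaussPdf v) * Real.exp (-u ^ 2 / 2)) :
    ∀ x : ℝ,
      |deriv g x| ≤ κ₁ * (1 + |x| * (gaussCdf x * (1 - gaussCdf x) / gaussPdf x)) ∧
      κ₁ * (1 + |x| * (gaussCdf x * (1 - gaussCdf x) / gaussPdf x)) ≤ 2 * κ₁ := by
  have hS : (0:ℝ) < Real.sqrt (2 * π) := Real.sqrt_pos.mpr (by positivity)
  set S := Real.sqrt (2 * π) with hSdef
  set c := ∫ v, h v * gaussPdf v with hcdef
  set m := ⨅ y, h y with hmdef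
  set M := ⨆ y, h y with hMdef
  have hml : ∀ u, m ≤ h u := fun u => ciInf_le hbdd' u
  have hMu : ∀ u, h u ≤ M := fun u => le_ciSup hbdd u
  have hmM : m ≤ M := (hml 0).trans (hMu 0)
  have hκ₀ : 0 ≤ κ₁ := by rw [hκ₁]; linarith
  have hE := integrable_E
  have hpdf_eq : gaussPdf = fun u : ℝ => S⁻¹ * Real.exp (-u ^ 2 / 2) := by
    funext u; rw [gaussPdf, hSdef]
  have hpdf_int : Integrable gaussPdf := by rw [hpdf_eq]; exact hE.const_mul _
  have hbound : ∃ C, ∀ u, ‖h u‖ ≤ C := by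
    refine ⟨|m| + |M|, fun u => ?_⟩
    rw [Real.norm_eq_abs, abs_le]
    constructor
    · linarith [neg_abs_le m, hml u, abs_nonneg M]
    · linarith [le_abs_self M, hMu u, abs_nonneg m]
  have hhpdf_int : Integrable (fun v => h v * gaussPdf v) :=
    hpdf_int.bdd_mul (c := hbound.choose) hmeas.aestronglyMeasurable (ae_of_all _ hbound.choose_spec)
  have hint_E : ∫ u : ℝ, Real.exp (-u ^ 2 / 2) = S := by
    rw [hSdef]
    have hq := integral_gaussian (1/2)
    have h2 : (fun u : ℝ => Real.exp (-u ^ 2 / 2)) = fun u : ℝ => Real.exp (-(1/2) * u ^ 2) := by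
      funext u; ring_nf
    rw [h2, hq, show π / (1/2 : ℝ) = 2 * π by ring]
  have hpdf_tot : ∫ v, gaussPdf v = 1 := by
    rw [hpdf_eq, MeasureTheory.integral_const_mul, hint_E, inv_mul_cancel₀ hS.ne']
  have hpdf_nonneg : ∀ u, 0 ≤ gaussPdf u := fun u => by rw [hpdf_eq]; positivity
  have hcM : c ≤ M := by
    have h1 : (∫ v, h v * gaussPdf v) ≤ ∫ v, M * gaussPdf v :=
      integral_mono hhpdf_int (hpdf_int.const_mul M)
        (fun v => mul_le_mul_of_nonneg_right (hMu v) (hpdf_nonneg v))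
    rwa [MeasureTheory.integral_const_mul, hpdf_tot, mul_one] at h1
  have hmc : m ≤ c := by
    have h1 : (∫ v, m * gaussPdf v) ≤ ∫ v, h v * gaussPdf v :=
      integral_mono (hpdf_int.const_mul m) hhpdf_int
        (fun v => mul_le_mul_of_nonneg_right (hml v) (hpdf_nonneg v))
    rwa [MeasureTheory.integral_const_mul, hpdf_tot, mul_one] at h1
  set f := fun u : ℝ => (h u - c) * Real.exp (-u ^ 2 / 2) with hfdef
  have hf_int : Integrable f := by
    refine hE.bdd_mul (c := M - m) ((hmeas.sub measurable_const).aestronglyMeasurable) (ae_of_all _ fun u => ?_)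
    rw [Real.norm_eq_abs, abs_le]
    exact ⟨by linarith [hml u], by linarith [hMu u]⟩
  have hhe_int : Integrable (fun u => h u * Real.exp (-u ^ 2 / 2)) :=
    hE.bdd_mul (c := hbound.choose) hmeas.aestronglyMeasurable (ae_of_all _ hbound.choose_spec)
  set T := fun y : ℝ => ∫ u in Iic y, Real.exp (-u ^ 2 / 2) with hTdef
  set Q := fun y : ℝ => ∫ u in Ioi y, Real.exp (-u ^ 2 / 2) with hQdef
  set I := fun y : ℝ => ∫ u in Iic y, f u with hIdef
  have hgI : ∀ y, g y = Real.exp (y ^ 2 / 2) * I y := fun y => hg y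
  have hT_nonneg : ∀ y, 0 ≤ T y := fun y => integral_nonneg fun u => (Real.exp_pos _).le
  have hQ_nonneg : ∀ y, 0 ≤ Q y := fun y => integral_nonneg fun u => (Real.exp_pos _).le
  have hTQ : ∀ y, T y + Q y = S := fun y => by
    rw [hTdef, hQdef]
    exact (intervalIntegral.integral_Iic_add_Ioi hE.integrableOn hE.integrableOn).trans hint_E
  have key_le : ∀ y, I y ≤ (M - c) * T y := by
    intro y
    have h1 : (∫ u in Iic y, f u) ≤ ∫ u in Iic y, (M - c) * Real.exp (-u ^ 2 / 2) :=
      integral_mono hf_int.integrableOn ((hE.const_mul (M - c)).integrableOn)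
        (fun u => mul_le_mul_of_nonneg_right (by linarith [hMu u]) (Real.exp_pos _).le)
    rwa [MeasureTheory.integral_const_mul] at h1
  have key_ge : ∀ y, (m - c) * T y ≤ I y := by
    intro y
    have h1 : (∫ u in Iic y, (m - c) * Real.exp (-u ^ 2 / 2)) ≤ ∫ u in Iic y, f u :=
      integral_mono ((hE.const_mul (m - c)).integrableOn) hf_int.integrableOn
        (fun u => mul_le_mul_of_nonneg_right (by linarith [hml u]) (Real.exp_pos _).le)
    rwa [MeasureTheory.integral_const_mul] at h1
  have keyQ_le : ∀ y, (∫ u in Ioi y, f u) ≤ (M - c) * Q y := by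
    intro y
    have h1 : (∫ u in Ioi y, f u) ≤ ∫ u in Ioi y, (M - c) * Real.exp (-u ^ 2 / 2) :=
      integral_mono hf_int.integrableOn ((hE.const_mul (M - c)).integrableOn)
        (fun u => mul_le_mul_of_nonneg_right (by linarith [hMu u]) (Real.exp_pos _).le)
    rwa [MeasureTheory.integral_const_mul] at h1
  have keyQ_ge : ∀ y, (m - c) * Q y ≤ ∫ u in Ioi y, f u := by
    intro y
    have h1 : (∫ u in Ioi y, (m - c) * Real.exp (-u ^ 2 / 2)) ≤ ∫ u in Ioi y, f u :=
      integral_mono ((hE.const_mul (m - c)).integrableOn) hf_int.integrableOn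
        (fun u => mul_le_mul_of_nonneg_right (by linarith [hml u]) (Real.exp_pos _).le)
    rwa [MeasureTheory.integral_const_mul] at h1
  have htot : ∫ u, f u = 0 := by
    have h2 : c = S⁻¹ * ∫ u, h u * Real.exp (-u ^ 2 / 2) := by
      rw [hcdef, hpdf_eq]
      rw [show (fun v => h v * (S⁻¹ * Real.exp (-v ^ 2 / 2)))
            = fun v => S⁻¹ * (h v * Real.exp (-v ^ 2 / 2)) from funext fun v => by ring]
      exact MeasureTheory.integral_const_mul _ _
    have h1 : ∫ u, h u * Real.exp (-u ^ 2 / 2) = S * c := by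
      rw [h2]; field_simp
    have h3 : ∫ u, f u = (∫ u, h u * Real.exp (-u ^ 2 / 2)) - ∫ u, c * Real.exp (-u ^ 2 / 2) := by
      rw [← MeasureTheory.integral_sub hhe_int (hE.const_mul c)]
      congr 1; funext u; rw [hfdef]; ring
    rw [h3, h1, MeasureTheory.integral_const_mul, hint_E]; ring
  have hIQ : ∀ y, I y = -(∫ u in Ioi y, f u) := by
    intro y
    have h1 := intervalIntegral.integral_Iic_add_Ioi (b := y) hf_int.integrableOn hf_int.integrableOn
    rw [htot] at h1
    linarith
  have hIabs : ∀ y, S * |I y| ≤ κ₁ * (T y * Q y) := by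
    intro y
    have hub : S * I y ≤ κ₁ * (T y * Q y) := by
      have h1 : I y ≤ (c - m) * Q y := by rw [hIQ y]; linarith [keyQ_ge y]
      have := min_trick (a := M - c) (b := c - m) (p := T y) (q := Q y)
        (by linarith) (by linarith) (hT_nonneg y) (hQ_nonneg y) (hTQ y) (key_le y) h1
      calc S * I y ≤ ((M - c) + (c - m)) * (T y * Q y) := this
        _ = κ₁ * (T y * Q y) := by rw [hκ₁]; ring
    have hlb : S * (-I y) ≤ κ₁ * (T y * Q y) := by
      have h1 : -I y ≤ (c - m) * T y := by linarith [key_ge y]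
      have h2 : -I y ≤ (M - c) * Q y := by rw [hIQ y]; linarith [keyQ_le y]
      have := min_trick (a := c - m) (b := M - c) (p := T y) (q := Q y)
        (by linarith) (by linarith) (hT_nonneg y) (hQ_nonneg y) (hTQ y) h1 h2
      calc S * (-I y) ≤ ((c - m) + (M - c)) * (T y * Q y) := this
        _ = κ₁ * (T y * Q y) := by rw [hκ₁]; ring
    rcases abs_cases (I y) with ⟨he, _⟩ | ⟨he, _⟩ <;> rw [he] <;> linarith
  clear_value S c m M f T Q I
  have hTy : ∀ y, T y = ∫ u in Iic y, Real.exp (-u ^ 2 / 2) := fun y => by rw [hTdef]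
  have hQy : ∀ y, Q y = ∫ u in Ioi y, Real.exp (-u ^ 2 / 2) := fun y => by rw [hQdef]
  have hIy : ∀ y, I y = ∫ u in Iic y, f u := fun y => by rw [hIdef]
  intro x
  have hexp_pos : (0:ℝ) < Real.exp (-x ^ 2 / 2) := Real.exp_pos _
  have hee : Real.exp (-x ^ 2 / 2) * Real.exp (x ^ 2 / 2) = 1 := by
    rw [← Real.exp_add, show -x ^ 2 / 2 + x ^ 2 / 2 = 0 by ring, Real.exp_zero]
  have hcdf : gaussCdf x = S⁻¹ * T x := by
    rw [gaussCdf, hpdf_eq, hTy]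
    exact MeasureTheory.integral_const_mul _ _
  have hcdf' : 1 - gaussCdf x = S⁻¹ * Q x := by
    have h1 := hTQ x
    rw [hcdf]
    field_simp
    linarith
  have hpdfx : gaussPdf x = S⁻¹ * Real.exp (-x ^ 2 / 2) := by rw [hpdf_eq]
  have hA : gaussCdf x * (1 - gaussCdf x) / gaussPdf x
      = T x * Q x * Real.exp (x ^ 2 / 2) / S := by
    rw [hcdf', hcdf, hpdfx, show (-x ^ 2 / 2 : ℝ) = -(x ^ 2 / 2) by ring, Real.exp_neg]
    rw [div_eq_div_iff (by positivity) hS.ne']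
    field_simp
  set A := gaussCdf x * (1 - gaussCdf x) / gaussPdf x with hAdef
  have hA_nonneg : 0 ≤ A := by
    rw [hA]
    exact div_nonneg (mul_nonneg (mul_nonneg (hT_nonneg x) (hQ_nonneg x))
      (Real.exp_nonneg _)) hS.le
  have hgx : |g x| ≤ κ₁ * A := by
    rw [hgI x, abs_mul, abs_of_pos (Real.exp_pos _), hA]
    have h2 : |I x| ≤ κ₁ * (T x * Q x) / S := by
      rw [le_div_iff₀ hS]; nlinarith [hIabs x]
    calc Real.exp (x ^ 2 / 2) * |I x| ≤ Real.exp (x ^ 2 / 2) * (κ₁ * (T x * Q x) / S) :=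
          mul_le_mul_of_nonneg_left h2 (Real.exp_nonneg _)
      _ = κ₁ * (T x * Q x * Real.exp (x ^ 2 / 2) / S) := by ring
  have hmills : |x| * (T x * Q x) ≤ S * Real.exp (-x ^ 2 / 2) := by
    rcases lt_trichotomy x 0 with hx | hx | hx
    · have h2 := tail_integral (show (0:ℝ) < -x by linarith)
      have h3 := integral_comp_neg_Iic x (fun u => u * Real.exp (-u ^ 2 / 2))
      simp only [neg_sq] at h2 h3
      have h1 : ∫ u in Iic x, -u * Real.exp (-u ^ 2 / 2) = Real.exp (-x ^ 2 / 2) := by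
        rw [← h2, ← h3]
      have h4 : (∫ u in Iic x, -x * Real.exp (-u ^ 2 / 2)) ≤ ∫ u in Iic x, -u * Real.exp (-u ^ 2 / 2) := by
        refine setIntegral_mono_on ((hE.const_mul (-x)).integrableOn)
          (by simpa [neg_mul] using integrable_mulE.neg.integrableOn) measurableSet_Iic
          (fun u hu => mul_le_mul_of_nonneg_right ?_ (Real.exp_pos _).le)
        simp only [mem_Iic] at hu
        linarith
      rw [MeasureTheory.integral_const_mul, h1, ← hTy x] at h4
      rw [abs_of_neg hx]
      nlinarith [hQ_nonneg x, hT_nonneg x, hTQ x, hexp_pos]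
    · subst hx; simp; positivity
    · have h1 := tail_integral hx
      have h4 : (∫ u in Ioi x, x * Real.exp (-u ^ 2 / 2)) ≤ ∫ u in Ioi x, u * Real.exp (-u ^ 2 / 2) := by
        refine setIntegral_mono_on ((hE.const_mul x).integrableOn)
          (integrable_mulE.integrableOn) measurableSet_Ioi
          (fun u hu => mul_le_mul_of_nonneg_right ?_ (Real.exp_pos _).le)
        simp only [mem_Ioi] at hu
        linarith
      rw [MeasureTheory.integral_const_mul, h1, ← hQy x] at h4
      rw [abs_of_pos hx]
      nlinarith [hQ_nonneg x, hT_nonneg x, hTQ x, hexp_pos]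
  constructor
  · by_cases hdiff : DifferentiableAt ℝ g x
    · have hd : HasDerivAt g (deriv g x) x := hdiff.hasDerivAt
      have hIfun : I = fun y => Real.exp (-y ^ 2 / 2) * g y := by
        funext y
        rw [hgI y, ← mul_assoc, ← Real.exp_add, show -y ^ 2 / 2 + y ^ 2 / 2 = 0 by ring,
          Real.exp_zero, one_mul]
      have hq : HasDerivAt (fun y : ℝ => Real.exp (-y ^ 2 / 2)) (-x * Real.exp (-x ^ 2 / 2)) x := by
        have h1 : HasDerivAt (fun t : ℝ => -t ^ 2 / 2) (-x) x := by
          have := ((hasDerivAt_pow 2 x).neg).div_const 2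
          refine this.congr_deriv ?_
          push_cast; ring
        have := h1.exp
        convert this using 1
        ring
      have hD : HasDerivAt I (-x * Real.exp (-x ^ 2 / 2) * g x
          + Real.exp (-x ^ 2 / 2) * deriv g x) x := by
        rw [hIfun]; exact hq.mul hd
      have hcontE : Continuous (fun u : ℝ => Real.exp (-u ^ 2 / 2)) := by fun_prop
      have hT' : HasDerivAt T (Real.exp (-x ^ 2 / 2)) x := by
        have hrep : T = fun y => T 0 + ∫ u in (0:ℝ)..y, Real.exp (-u ^ 2 / 2) := by
          funext y
          rw [hTy y, hTy 0, ← intervalIntegral.integral_Iic_sub_Iic hE.integrableOn hE.integrableOn]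
          ring
        rw [hrep]
        have hft := intervalIntegral.integral_hasDerivAt_right (a := (0:ℝ)) (b := x)
          hE.intervalIntegrable
          (hcontE.stronglyMeasurableAtFilter _ _) hcontE.continuousAt
        simpa using hft
      have hslope : ∀ y, y ≠ x → slope I x y ≤ (M - c) * slope T x y
          ∧ (m - c) * slope T x y ≤ slope I x y := by
        intro y hy
        have hIsub : ∀ a b : ℝ, I b - I a = ∫ u in a..b, f u := fun a b => by
          rw [hIy b, hIy a]
          exact intervalIntegral.integral_Iic_sub_Iic hf_int.integrableOn hf_int.integrableOn
        have hTsub : ∀ a b : ℝ, T b - T a = ∫ u in a..b, Real.exp (-u ^ 2 / 2) := fun a b => by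
          rw [hTy b, hTy a]
          exact intervalIntegral.integral_Iic_sub_Iic hE.integrableOn hE.integrableOn
        have hcmp : ∀ a b : ℝ, a ≤ b →
            ((∫ u in a..b, f u) ≤ (M - c) * ∫ u in a..b, Real.exp (-u ^ 2 / 2))
            ∧ (m - c) * (∫ u in a..b, Real.exp (-u ^ 2 / 2)) ≤ ∫ u in a..b, f u := by
          intro a b hab
          have hfy : ∀ u : ℝ, f u = (h u - c) * Real.exp (-u ^ 2 / 2) := fun u => by rw [hfdef]
          constructor
          · rw [← intervalIntegral.integral_const_mul]
            exact intervalIntegral.integral_mono_on hab hf_int.intervalIntegrable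
              ((hE.const_mul _).intervalIntegrable)
              (fun u _ => by
                rw [hfy u]
                exact mul_le_mul_of_nonneg_right (by linarith [hMu u]) (Real.exp_pos _).le)
          · rw [← intervalIntegral.integral_const_mul]
            exact intervalIntegral.integral_mono_on hab ((hE.const_mul _).intervalIntegrable)
              hf_int.intervalIntegrable
              (fun u _ => by
                rw [hfy u]
                exact mul_le_mul_of_nonneg_right (by linarith [hml u]) (Real.exp_pos _).le)
        rcases hy.lt_or_gt with hlt | hlt
        · have h1 := hcmp y x hlt.le
          rw [slope_def_field, slope_def_field,
            show I y - I x = -(I x - I y) by ring, show T y - T x = -(T x - T y) by ring,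
            hIsub y x, hTsub y x, show y - x = -(x - y) by ring, neg_div_neg_eq, neg_div_neg_eq]
          constructor
          · rw [← mul_div_assoc]
            gcongr
            · linarith
          · rw [← mul_div_assoc]
            gcongr
            · linarith
        · have h1 := hcmp x y hlt.le
          rw [slope_def_field, slope_def_field, hIsub x y, hTsub x y]
          constructor
          · rw [← mul_div_assoc]
            gcongr
            · linarith
          · rw [← mul_div_assoc]
            gcongr
            · linarith
      have htendI := hasDerivAt_iff_tendsto_slope.mp hD
      have htendT := hasDerivAt_iff_tendsto_slope.mp hT'
      have hub : -x * Real.exp (-x ^ 2 / 2) * g x + Real.exp (-x ^ 2 / 2) * deriv g x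
          ≤ (M - c) * Real.exp (-x ^ 2 / 2) :=
        le_of_tendsto_of_tendsto htendI (htendT.const_mul (M - c))
          (Filter.eventually_of_mem self_mem_nhdsWithin
            (fun y hy => (hslope y (Set.mem_compl_singleton_iff.mp hy)).1))
      have hlb : (m - c) * Real.exp (-x ^ 2 / 2)
          ≤ -x * Real.exp (-x ^ 2 / 2) * g x + Real.exp (-x ^ 2 / 2) * deriv g x :=
        le_of_tendsto_of_tendsto (htendT.const_mul (m - c)) htendI
          (Filter.eventually_of_mem self_mem_nhdsWithin
            (fun y hy => (hslope y (Set.mem_compl_singleton_iff.mp hy)).2))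
      set D := -x * Real.exp (-x ^ 2 / 2) * g x + Real.exp (-x ^ 2 / 2) * deriv g x with hDdef
      have hd_eq : deriv g x = x * g x + Real.exp (x ^ 2 / 2) * D := by
        rw [hDdef]
        have h9 : Real.exp (x ^ 2 / 2) * Real.exp (-x ^ 2 / 2) = 1 := by linarith [hee]
        calc deriv g x = x * g x + (Real.exp (x ^ 2 / 2) * Real.exp (-x ^ 2 / 2))
              * (-x * g x + deriv g x) := by rw [h9]; ring
          _ = x * g x + Real.exp (x ^ 2 / 2)
              * (-x * Real.exp (-x ^ 2 / 2) * g x + Real.exp (-x ^ 2 / 2) * deriv g x) := by ring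
      have hDb : |Real.exp (x ^ 2 / 2) * D| ≤ κ₁ := by
        have h9 : Real.exp (x ^ 2 / 2) * Real.exp (-x ^ 2 / 2) = 1 := by linarith [hee]
        have h7 : Real.exp (x ^ 2 / 2) * D ≤ M - c := by
          calc Real.exp (x ^ 2 / 2) * D
              ≤ Real.exp (x ^ 2 / 2) * ((M - c) * Real.exp (-x ^ 2 / 2)) :=
                mul_le_mul_of_nonneg_left hub (Real.exp_nonneg _)
            _ = (M - c) * (Real.exp (x ^ 2 / 2) * Real.exp (-x ^ 2 / 2)) := by ring
            _ = M - c := by rw [h9, mul_one]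
        have h8 : m - c ≤ Real.exp (x ^ 2 / 2) * D := by
          calc (m - c : ℝ) = (m - c) * (Real.exp (x ^ 2 / 2) * Real.exp (-x ^ 2 / 2)) := by
                rw [h9, mul_one]
            _ = Real.exp (x ^ 2 / 2) * ((m - c) * Real.exp (-x ^ 2 / 2)) := by ring
            _ ≤ Real.exp (x ^ 2 / 2) * D := mul_le_mul_of_nonneg_left hlb (Real.exp_nonneg _)
        rw [abs_le, hκ₁]
        constructor <;> linarith
      calc |deriv g x| = |x * g x + Real.exp (x ^ 2 / 2) * D| := by rw [← hd_eq]
        _ ≤ |x * g x| + |Real.exp (x ^ 2 / 2) * D| := abs_add_le _ _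
        _ ≤ |x| * (κ₁ * A) + κ₁ := by
            rw [abs_mul]
            exact add_le_add (mul_le_mul_of_nonneg_left hgx (abs_nonneg x)) hDb
        _ = κ₁ * (1 + |x| * A) := by ring
    · rw [deriv_zero_of_not_differentiableAt hdiff, abs_zero]
      have := mul_nonneg (abs_nonneg x) hA_nonneg
      nlinarith
  · have h1 : |x| * A ≤ 1 := by
      rw [hA, ← mul_div_assoc, div_le_one hS]
      have h6 := mul_le_mul_of_nonneg_right hmills (Real.exp_nonneg (x ^ 2 / 2))
      calc |x| * (T x * Q x * rexp (x ^ 2 / 2)) = |x| * (T x * Q x) * rexp (x ^ 2 / 2) := by ring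
        _ ≤ S * rexp (-x ^ 2 / 2) * rexp (x ^ 2 / 2) := h6
        _ = S := by rw [mul_assoc, hee, mul_one]
    nlinarith [mul_nonneg (abs_nonneg x) hA_nonneg]
end
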